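/- Let α ∈ (0,1), let S be a finite nonempty index set, and let w_k, R_k > 0 for k ∈ S. Then the maximum over γ_k ∈ [0,1] with ∑_{k∈S} γ_k = 1 of ∑_{k∈S} w_k (γ_k R_k)^{1-α}/(1-α) equals (∑_{k∈S} (w_k R_k^{1-α}/(1-α))^{1/α})^α. -/

import Mathlib

open Real Finset

theorem stmt_3 {ι : Type*} (S : Finset ι) (hS : S.Nonempty) (α : ℝ)
    (hα : α ∈ Set.Ioo (0:ℝ) 1)
    (w R : ι → ℝ) (hw : ∀ k ∈ S, 0 < w k) (hR : ∀ k ∈ S, 0 < R k) :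
    IsGreatest {x : ℝ | ∃ γ : ι → ℝ, (∀ k ∈ S, γ k ∈ Set.Icc (0:ℝ) 1) ∧
        (∑ k ∈ S, γ k = 1) ∧
        x = ∑ k ∈ S, w k * ((γ k * R k) ^ (1 - α) / (1 - α))}
      ((∑ k ∈ S, (w k * (R k) ^ (1 - α) / (1 - α)) ^ (1/α)) ^ α) := by
  obtain ⟨hα0, hα1⟩ := hα
  have h1α : 0 < 1 - α := by linarith
  set c : ι → ℝ := fun k => w k * R k ^ (1 - α) / (1 - α) with hc_def
  have hc : ∀ k ∈ S, 0 < c k := fun k hk =>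
    div_pos (mul_pos (hw k hk) (rpow_pos_of_pos (hR k hk) _)) h1α
  set T : ℝ := ∑ k ∈ S, c k ^ (1/α) with hT_def
  have hTpos : 0 < T := Finset.sum_pos (fun k hk => rpow_pos_of_pos (hc k hk) _) hS
  -- key rewriting of the objective
  have key : ∀ γ : ι → ℝ, (∀ k ∈ S, 0 ≤ γ k) →
      ∑ k ∈ S, w k * ((γ k * R k) ^ (1 - α) / (1 - α))
        = ∑ k ∈ S, c k * γ k ^ (1 - α) := by
    intro γ hγ
    refine Finset.sum_congr rfl fun k hk => ?_
    rw [Real.mul_rpow (hγ k hk) (hR k hk).le, hc_def]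
    field_simp
  constructor
  · -- membership: optimal γ
    refine ⟨fun k => c k ^ (1/α) / T, ?_, ?_, ?_⟩
    · intro k hk
      constructor
      · exact div_nonneg (Real.rpow_nonneg (hc k hk).le _) hTpos.le
      · rw [div_le_one hTpos]
        exact Finset.single_le_sum (fun j hj => (rpow_pos_of_pos (hc j hj) _).le) hk
    · rw [← Finset.sum_div, ← hT_def, div_self hTpos.ne']
    · rw [key _ (fun k hk => div_nonneg (Real.rpow_nonneg (hc k hk).le _) hTpos.le)]
      have : ∀ k ∈ S, c k * (c k ^ (1/α) / T) ^ (1 - α) = c k ^ (1/α) * T ^ (-(1-α)) := by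
        intro k hk
        have hck := hc k hk
        rw [Real.div_rpow (Real.rpow_nonneg hck.le _) hTpos.le,
          ← Real.rpow_mul hck.le, div_eq_mul_inv, ← Real.rpow_neg hTpos.le, ← mul_assoc]
        congr 1
        rw [show (1:ℝ)/α * (1-α) = 1/α - 1 by field_simp,
          Real.rpow_sub hck, Real.rpow_one]
        field_simp
      rw [Finset.sum_congr rfl this, ← Finset.sum_mul, ← hT_def,
        show -(1-α) = α - 1 by ring, Real.rpow_sub hTpos, Real.rpow_one]
      field_simp
  · -- upper bound
    rintro x ⟨γ, hγ, hγsum, rfl⟩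
    rw [key _ (fun k hk => (hγ k hk).1)]
    have hpq : Real.HolderConjugate (1/α) (1/(1-α)) := by
      rw [Real.holderConjugate_iff]
      constructor
      · rw [lt_div_iff₀ hα0]; linarith
      · rw [one_div, one_div, inv_inv, inv_inv]; ring
    have H := Real.inner_le_Lp_mul_Lq_of_nonneg (s := S) (f := c)
      (g := fun k => γ k ^ (1 - α)) hpq
      (fun k hk => (hc k hk).le)
      (fun k hk => Real.rpow_nonneg (hγ k hk).1 _)
    have hg : ∀ k ∈ S, (γ k ^ (1-α)) ^ (1/(1-α)) = γ k := by
      intro k hk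
      rw [← Real.rpow_mul (hγ k hk).1, mul_one_div, div_self h1α.ne', Real.rpow_one]
    rw [Finset.sum_congr rfl hg, hγsum, Real.one_rpow, mul_one] at H
    calc ∑ k ∈ S, c k * γ k ^ (1 - α) ≤ (∑ k ∈ S, c k ^ (1/α)) ^ (1/(1/α)) := H
      _ = T ^ α := by rw [one_div_one_div]
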